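/- Let k ≥ 1 and a₁,…,a_k ∈ ℂ. Then there exists a unique pair of polynomials P, Q ∈ ℂ[z] such that ∏_{i=1}^{k}(aᵢ + i t) = Q(t²) + i t P(t²) for all t ∈ ℂ. Moreover these polynomials satisfy z·P(z)² + Q(z)² = ∏_{i=1}^{k}(z + aᵢ²) for all z ∈ ℂ, and Q(0) = ∏_{i=1}^{k} aᵢ. -/

import Mathlib

open Polynomial

/-- Tyurina's polynomials `P`, `Q` for the D-type simultaneous resolution:
there is a unique pair of polynomials `P, Q ∈ ℂ[z]` with
`∏ᵢ (aᵢ + i t) = Q(t²) + i t P(t²)` for all `t`, and any such pair satisfies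
`z P(z)² + Q(z)² = ∏ᵢ (z + aᵢ²)` and `Q(0) = ∏ᵢ aᵢ`. -/
lemma even_odd_decomp (f : ℂ[X]) :
    ∃ P Q : ℂ[X], ∀ t : ℂ, f.eval t = Q.eval (t^2) + Complex.I * t * P.eval (t^2) := by
  induction f using Polynomial.induction_on' with
  | add p q hp hq =>
    obtain ⟨P1, Q1, h1⟩ := hp
    obtain ⟨P2, Q2, h2⟩ := hq
    refine ⟨P1 + P2, Q1 + Q2, fun t => ?_⟩
    simp only [eval_add, h1 t, h2 t]; ring
  | monomial n c =>
    rcases Nat.even_or_odd n with ⟨m, hm⟩ | ⟨m, hm⟩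
    · refine ⟨0, monomial m c, fun t => ?_⟩
      subst hm
      simp only [eval_monomial, eval_zero, mul_zero, add_zero, ← sq, ← pow_mul, two_mul]
    · refine ⟨monomial m (c / Complex.I), 0, fun t => ?_⟩
      subst hm
      simp only [eval_monomial, eval_zero, zero_add, ← sq, ← pow_mul]
      field_simp
      linear_combination
theorem tyurina_even_odd_polynomials (k : ℕ) (hk : 1 ≤ k) (a : Fin k → ℂ) :
    (∃! PQ : ℂ[X] × ℂ[X],
      ∀ t : ℂ, ∏ i, (a i + Complex.I * t)
        = PQ.2.eval (t ^ 2) + Complex.I * t * PQ.1.eval (t ^ 2)) ∧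
    ∀ P Q : ℂ[X],
      (∀ t : ℂ, ∏ i, (a i + Complex.I * t)
        = Q.eval (t ^ 2) + Complex.I * t * P.eval (t ^ 2)) →
      (∀ z : ℂ, z * P.eval z ^ 2 + Q.eval z ^ 2 = ∏ i, (z + a i ^ 2)) ∧
        Q.eval 0 = ∏ i, a i := by
  have sqrt : ∀ z : ℂ, ∃ t : ℂ, t ^ 2 = z := fun z =>
    IsAlgClosed.exists_pow_nat_eq z two_pos
  constructor
  · obtain ⟨P, Q, hPQ⟩ := even_odd_decomp (∏ i, (C (a i) + C Complex.I * X))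
    refine ⟨(P, Q), fun t => ?_, ?_⟩
    · have := hPQ t
      simpa [eval_prod] using this
    · rintro ⟨P', Q'⟩ h'
      have key : ∀ t : ℂ, Q'.eval (t^2) + Complex.I * t * P'.eval (t^2)
          = Q.eval (t^2) + Complex.I * t * P.eval (t^2) := by
        intro t
        rw [← h' t]
        have := hPQ t
        simpa [eval_prod] using this
      have hQ' : ∀ t : ℂ, Q'.eval (t^2) = Q.eval (t^2) := by
        intro t
        have h1 := key t
        have h2 := key (-t)
        simp only [neg_sq] at h2
        linear_combination (h1 + h2) / 2
      have hQeq : Q' = Q := by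
        apply Polynomial.funext
        intro z
        obtain ⟨t, rfl⟩ := sqrt z
        exact hQ' t
      have hP' : ∀ t : ℂ, t ≠ 0 → P'.eval (t^2) = P.eval (t^2) := by
        intro t ht
        have h1 := key t
        rw [hQ' t] at h1
        have h2 : Complex.I * t * P'.eval (t^2) = Complex.I * t * P.eval (t^2) := by
          linear_combination h1
        exact mul_left_cancel₀ (mul_ne_zero Complex.I_ne_zero ht) h2
      have hPeq : P' = P := by
        have hz : (P' - P) = 0 := by
          apply Polynomial.eq_zero_of_infinite_isRoot
          apply Set.Infinite.mono (s := {z : ℂ | z ≠ 0})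
          · intro z hz
            obtain ⟨t, rfl⟩ := sqrt z
            have ht : t ≠ 0 := fun h => hz (by simp [h])
            simp [IsRoot, hP' t ht]
          · exact Set.Finite.infinite_compl (Set.finite_singleton 0)
        exact sub_eq_zero.mp hz
      simp [Prod.ext_iff, hPeq, hQeq]
  · intro P Q h
    constructor
    · intro z
      obtain ⟨t, rfl⟩ := sqrt z
      have h1 := h t
      have h2 := h (-t)
      simp only [neg_sq] at h2
      have hprod : (∏ i, (a i + Complex.I * t)) * (∏ i, (a i + Complex.I * (-t)))
          = ∏ i, (t^2 + a i ^ 2) := by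
        rw [← Finset.prod_mul_distrib]
        refine Finset.prod_congr rfl fun i _ => ?_
        linear_combination (-t^2) * Complex.I_sq
      rw [h1, h2] at hprod
      linear_combination hprod + (P.eval (t^2))^2 * t^2 * Complex.I_sq
    · simpa using (h 0).symm
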